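/- Let D ≻ 0 be a d×d positive definite matrix, c > 0, and x ∈ ℝ^d. Define D₊ = (D⁻¹ + c⁻¹I)⁻¹ + xxᵀ. Then D₊⁻¹(I + c⁻¹D)⁻¹ = D⁻¹ − (D⁻¹ + c⁻¹I) x xᵀ D⁻¹ / (1 + xᵀ(D⁻¹ + c⁻¹I)x). -/

import Mathlib

open Matrix

lemma mul_vecMulVec' {d : ℕ} (M : Matrix (Fin d) (Fin d) ℝ) (x y : Fin d → ℝ) :
    M * vecMulVec x y = vecMulVec (M *ᵥ x) y := by
  ext i j
  simp [mul_apply, vecMulVec_apply, mulVec, dotProduct, Finset.sum_mul, mul_assoc]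

lemma vecMulVec_mul_vecMulVec {d : ℕ} (x y a b : Fin d → ℝ) :
    vecMulVec x y * vecMulVec a b = (y ⬝ᵥ a) • vecMulVec x b := by
  ext i j
  simp [mul_apply, vecMulVec_apply, dotProduct, Finset.sum_mul, Finset.mul_sum]
  rw [Finset.sum_congr rfl]
  intros; ring

theorem stmt_4 (d : ℕ) (c : ℝ) (hc : 0 < c)
    (D : Matrix (Fin d) (Fin d) ℝ) (hD : D.PosDef) (x : Fin d → ℝ)
    (Dplus : Matrix (Fin d) (Fin d) ℝ)
    (hDplus : Dplus = (D⁻¹ + c⁻¹ • (1 : Matrix (Fin d) (Fin d) ℝ))⁻¹ + vecMulVec x x) :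
    Dplus⁻¹ * ((1 : Matrix (Fin d) (Fin d) ℝ) + c⁻¹ • D)⁻¹
      = D⁻¹ - (1 + x ⬝ᵥ ((D⁻¹ + c⁻¹ • (1 : Matrix (Fin d) (Fin d) ℝ)) *ᵥ x))⁻¹
          • ((D⁻¹ + c⁻¹ • (1 : Matrix (Fin d) (Fin d) ℝ)) * vecMulVec x x * D⁻¹) := by
  set A : Matrix (Fin d) (Fin d) ℝ := D⁻¹ + c⁻¹ • (1 : Matrix (Fin d) (Fin d) ℝ) with hA_def
  set X : Matrix (Fin d) (Fin d) ℝ := vecMulVec x x with hX_def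
  have hsm : (c⁻¹ • (1 : Matrix (Fin d) (Fin d) ℝ)).PosSemidef := by
    refine PosSemidef.of_dotProduct_mulVec_nonneg ?_ ?_
    · unfold Matrix.IsHermitian
      rw [conjTranspose_smul]
      simp
    · intro y
      have h0 : 0 ≤ star y ⬝ᵥ y := Finset.sum_nonneg fun i _ => mul_self_nonneg _
      simp only [smul_mulVec, one_mulVec, dotProduct_smul, smul_eq_mul]
      positivity
  have hA : A.PosDef := hD.inv.add_posSemidef hsm
  have hAinv : A * A⁻¹ = 1 := mul_nonsing_inv A hA.det_pos.ne'.isUnit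
  have hDinv : D * D⁻¹ = 1 := mul_nonsing_inv D hD.det_pos.ne'.isUnit
  set q : ℝ := x ⬝ᵥ A *ᵥ x with hq_def
  have hq : 0 ≤ q := by
    have := hA.posSemidef.dotProduct_mulVec_nonneg x
    simpa [hq_def] using this
  have ht : (1 : ℝ) + q ≠ 0 := by positivity
  have hfac : (1 : Matrix (Fin d) (Fin d) ℝ) + c⁻¹ • D = D * A := by
    rw [hA_def, Matrix.mul_add, hDinv, mul_smul_comm, mul_one]
  set M : Matrix (Fin d) (Fin d) ℝ := A * X with hM_def
  have hXM : X * M = q • X := by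
    rw [hM_def, hX_def, mul_vecMulVec', _root_.vecMulVec_mul_vecMulVec, hq_def]
  have hMM : M * M = q • M := by
    calc M * M = A * (X * M) := by rw [hM_def, mul_assoc]
    _ = q • M := by rw [hXM, mul_smul_comm, hM_def]
  rw [hDplus, hfac, ← Matrix.mul_inv_rev]
  apply inv_eq_right_inv
  have hexp : D * A * (A⁻¹ + X) = D + D * M := by
    rw [mul_add, mul_assoc, hAinv, mul_one, mul_assoc, hM_def]
  rw [hexp]
  have hDMMD : D * M * ((1 + q)⁻¹ • (M * D⁻¹)) = ((1 + q)⁻¹ * q) • (D * (M * D⁻¹)) := by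
    rw [mul_smul_comm, mul_assoc D M, ← mul_assoc M M, hMM, smul_mul_assoc,
      mul_smul_comm, smul_smul, mul_assoc]
  have hsq : (1 + q)⁻¹ * q = 1 - (1 + q)⁻¹ := by
    field_simp
    ring
  rw [add_mul, mul_sub, mul_sub, hDinv, mul_smul_comm, hDMMD, hsq, ← mul_assoc D M D⁻¹]
  rw [mul_assoc D M D⁻¹]
  module
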